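/- The number of closed components of the mirror-curve obtained from the rectangular grid RG[p,q] with no internal mirrors equals gcd(p,q). -/

import Mathlib

/-! Mirror-curves on the rectangular grid `RG[p,q]`, in doubled integer coordinates:
edge midpoints of the grid are the points `(x, y)` with `0 ≤ x ≤ 2p`, `0 ≤ y ≤ 2q` and
exactly one of `x`, `y` odd.  A mirror configuration `c` assigns to (internal) edge
midpoints `none` (no mirror: the curve passes straight through, a crossing site or a
traversed site) or `some b`, where `b = true` is the mirror label `2` (mirror collinear
with the edge) and `b = false` is the label `−2` (mirror perpendicular to the edge).
A state of the curve is a position (an edge midpoint) together with a diagonal direction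
`(±1, ±1)`; the dynamics reflects off boundary walls and off internal mirrors. -/

/-- The direction taken after the interaction at the current position: internal mirrors
reflect according to their orientation, and the boundary walls of the rectangle reflect
the corresponding coordinate of the direction. -/
def newDir (p q : ℕ) (c : ℤ × ℤ → Option Bool) (s : (ℤ × ℤ) × (ℤ × ℤ)) : ℤ × ℤ :=
  let x := s.1.1
  let y := s.1.2
  let d : ℤ × ℤ :=
    match c s.1 with
    | some b => if b = decide (x % 2 = 0) then (-s.2.1, s.2.2) else (s.2.1, -s.2.2)
    | none => s.2
  ((if x = 0 then 1 else if x = (2 * p : ℤ) then -1 else d.1),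
    (if y = 0 then 1 else if y = (2 * q : ℤ) then -1 else d.2))

/-- One step of the mirror-curve dynamics: move one diagonal step (from an edge midpoint
to a midpoint of an adjacent edge) in the reflected direction. -/
def mcStep (p q : ℕ) (c : ℤ × ℤ → Option Bool) (s : (ℤ × ℤ) × (ℤ × ℤ)) :
    (ℤ × ℤ) × (ℤ × ℤ) :=
  ((s.1.1 + (newDir p q c s).1, s.1.2 + (newDir p q c s).2), newDir p q c s)

/-- Valid states: the position is an edge midpoint of `RG[p,q]` (in doubled coordinates:
exactly one coordinate odd, within the rectangle), and the direction is diagonal. -/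
def MCValid (p q : ℕ) (s : (ℤ × ℤ) × (ℤ × ℤ)) : Prop :=
  0 ≤ s.1.1 ∧ s.1.1 ≤ 2 * p ∧ 0 ≤ s.1.2 ∧ s.1.2 ≤ 2 * q ∧
    (Odd s.1.1 ↔ ¬ Odd s.1.2) ∧ (s.2.1 = 1 ∨ s.2.1 = -1) ∧ (s.2.2 = 1 ∨ s.2.2 = -1)

/-- Two directed states lie on the same component of the mirror-curve if one follows the
other under the dynamics, or if one is the orientation reversal of the other. -/
def mcRel (p q : ℕ) (c : ℤ × ℤ → Option Bool) (a b : {s // MCValid p q s}) : Prop :=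
  mcStep p q c a.val = b.val ∨ (a.val.1 = b.val.1 ∧ a.val.2 = -b.val.2)

/-- The number of closed components of the mirror-curve determined by the configuration
`c` on `RG[p,q]`: the number of equivalence classes of directed states under the
equivalence generated by the dynamics and orientation reversal. -/
noncomputable def mcComponents (p q : ℕ) (c : ℤ × ℤ → Option Bool) : ℕ :=
  Nat.card (Quot (mcRel p q c))

namespace MCAux

/-- one-dimensional reflected direction at position `x` with walls `0`, `m`. -/
def rd (m x d : ℤ) : ℤ := if x = 0 then 1 else if x = m then -1 else d

lemma rd_pm {m x d : ℤ} (h : d = 1 ∨ d = -1) : rd m x d = 1 ∨ rd m x d = -1 := by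
  unfold rd; split_ifs <;> simp [h]

lemma rd_zero (m d : ℤ) : rd m 0 d = 1 := if_pos rfl

lemma rd_wall {m : ℤ} (hm : m ≠ 0) (d : ℤ) : rd m m d = -1 := by
  unfold rd; rw [if_neg hm, if_pos rfl]

lemma rd_interior {m x : ℤ} (h0 : x ≠ 0) (hm : x ≠ m) (d : ℤ) : rd m x d = d := by
  unfold rd; rw [if_neg h0, if_neg hm]

/-- key one-dimensional step congruence: unfolded coordinate advances by 1 mod `2m`. -/
lemma u_step {m x d : ℤ} (hm : 2 ≤ m) (h0 : 0 ≤ x) (h1 : x ≤ m) (hd : d = 1 ∨ d = -1) :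
    2*m ∣ rd m (x + rd m x d) (rd m x d) * (x + rd m x d) - (rd m x d * x + 1) := by
  rcases eq_or_ne x 0 with h | hx0
  · subst h
    rw [rd_zero, rd_interior (by omega) (by omega)]
    exact ⟨0, by ring⟩
  rcases eq_or_ne x m with h | hxm
  · subst h
    rw [rd_wall (by omega), rd_interior (by omega) (by omega)]
    exact ⟨0, by ring⟩
  rw [rd_interior hx0 hxm]
  rcases hd with h | h <;> subst h
  · rcases eq_or_ne (x+1) m with h | hxm1
    · rw [h, rd_wall (by omega)]
      exact ⟨-1, by omega⟩
    · rw [rd_interior (by omega) hxm1]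
      exact ⟨0, by ring⟩
  · rcases eq_or_ne (x + -1) 0 with h | hx1
    · rw [h, rd_zero]
      have hx : x = 1 := by omega
      subst hx; exact ⟨0, by ring⟩
    · rw [rd_interior hx1 (by omega)]
      exact ⟨0, by ring⟩

/-- one-dimensional reversal congruence. -/
lemma u_rev (m x d : ℤ) : 2*m ∣ rd m x (-d) * x + rd m x d * x := by
  rcases eq_or_ne x 0 with h | hx0
  · subst h; exact ⟨0, by ring⟩
  rcases eq_or_ne x m with h | hxm
  · subst h; rw [rd_wall hx0, rd_wall hx0]; exact ⟨-1, by ring⟩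
  · rw [rd_interior hx0 hxm, rd_interior hx0 hxm]; exact ⟨0, by ring⟩

/-- one-dimensional injectivity of the unfolded coordinate mod `2m`. -/
lemma u_inj {m x d x' d' : ℤ} (hm : 2 ≤ m) (h0 : 0 ≤ x) (h1 : x ≤ m)
    (h0' : 0 ≤ x') (h1' : x' ≤ m) (hd : d = 1 ∨ d = -1) (hd' : d' = 1 ∨ d' = -1)
    (h : 2*m ∣ rd m x d * x - rd m x' d' * x') :
    x = x' ∧ rd m x d = rd m x' d' := by
  have he := rd_pm (m := m) (x := x) hd
  have he' := rd_pm (m := m) (x := x') hd'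
  have hz : x = 0 → rd m x d = 1 := fun hh => hh ▸ rd_zero m d
  have hw : x = m → rd m x d = -1 := fun hh => hh ▸ rd_wall (by omega) d
  have hz' : x' = 0 → rd m x' d' = 1 := fun hh => hh ▸ rd_zero m d'
  have hw' : x' = m → rd m x' d' = -1 := fun hh => hh ▸ rd_wall (by omega) d'
  set e := rd m x d with hedef
  set e' := rd m x' d' with hedef'
  obtain ⟨k, hk⟩ := h
  have hne0 : e = -1 → x ≠ 0 := by intro h1 h2; have := hz h2; omega
  have hnem : e = 1 → x ≠ m := by intro h1 h2; have := hw h2; omega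
  have hne0' : e' = -1 → x' ≠ 0 := by intro h1 h2; have := hz' h2; omega
  have hnem' : e' = 1 → x' ≠ m := by intro h1 h2; have := hw' h2; omega
  rcases he with he | he <;> rcases he' with he' | he' <;>
    rw [he, he'] at hk <;>
    [skip; skip; skip; skip] <;>
    first
    | (have hx := hnem he; have hx' := hnem' he';
       have hk1 : k = 0 := by nlinarith
       rw [hk1] at hk; constructor <;> omega)
    | (have hx := hnem he; have hx' := hne0' he';
       have hk1 : k = 0 ∨ k = 1 := by
         rcases lt_trichotomy k 0 with h | h | h
         · exfalso; nlinarith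
         · left; exact h
         · right; nlinarith
       exfalso; rcases hk1 with h | h <;> rw [h] at hk
       · have : x = 0 ∧ x' = 0 := by constructor <;> nlinarith
         exact hne0' he' this.2
       · have : x = m ∧ x' = m := by constructor <;> nlinarith
         exact hnem he this.1)
    | (have hx := hne0 he; have hx' := hnem' he';
       have hk1 : k = 0 ∨ k = -1 := by
         rcases lt_trichotomy k 0 with h | h | h
         · right; nlinarith
         · left; exact h
         · exfalso; nlinarith
       exfalso; rcases hk1 with h | h <;> rw [h] at hk
       · have : x = 0 ∧ x' = 0 := by constructor <;> nlinarith
         exact hne0 he this.1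
       · have : x = m ∧ x' = m := by constructor <;> nlinarith
         exact hnem' he' this.2)
    | (have hx := hne0 he; have hx' := hne0' he';
       have hk1 : k = 0 := by nlinarith
       rw [hk1] at hk; constructor <;> omega)

end MCAux

namespace MCAux

lemma rd_move {m x d : ℤ} (hm : 2 ≤ m) (h0 : 0 ≤ x) (h1 : x ≤ m) (hd : d = 1 ∨ d = -1) :
    0 ≤ x + rd m x d ∧ x + rd m x d ≤ m := by
  rcases eq_or_ne x 0 with h | h0'
  · subst h; rw [rd_zero]; omega
  rcases eq_or_ne x m with h | hm'
  · subst h; rw [rd_wall (by omega)]; omega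
  · rw [rd_interior h0' hm']; rcases hd with h | h <;> rw [h] <;> omega

lemma newDir_c0 (p q : ℕ) (s : (ℤ × ℤ) × (ℤ × ℤ)) :
    newDir p q (fun _ => none) s = (rd (2*(p:ℤ)) s.1.1 s.2.1, rd (2*(q:ℤ)) s.1.2 s.2.2) := rfl

lemma mcStep_c0 (p q : ℕ) (s : (ℤ × ℤ) × (ℤ × ℤ)) :
    mcStep p q (fun _ => none) s =
      ((s.1.1 + rd (2*(p:ℤ)) s.1.1 s.2.1, s.1.2 + rd (2*(q:ℤ)) s.1.2 s.2.2),
        (rd (2*(p:ℤ)) s.1.1 s.2.1, rd (2*(q:ℤ)) s.1.2 s.2.2)) := rfl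

/-- unfolded x-coordinate (as an integer; well-defined mod 4p). -/
def uI (p : ℕ) (s : (ℤ × ℤ) × (ℤ × ℤ)) : ℤ := rd (2*(p:ℤ)) s.1.1 s.2.1 * s.1.1

/-- unfolded y-coordinate (as an integer; well-defined mod 4q). -/
def vI (q : ℕ) (s : (ℤ × ℤ) × (ℤ × ℤ)) : ℤ := rd (2*(q:ℤ)) s.1.2 s.2.2 * s.1.2

/-- the slope invariant `v - u`. -/
def psiI (p q : ℕ) (s : (ℤ × ℤ) × (ℤ × ℤ)) : ℤ := vI q s - uI p s

variable {p q : ℕ}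

lemma valid_step (hp : 0 < p) (hq : 0 < q) {s : (ℤ × ℤ) × (ℤ × ℤ)} (hs : MCValid p q s) :
    MCValid p q (mcStep p q (fun _ => none) s) := by
  obtain ⟨h1, h2, h3, h4, h5, h6, h7⟩ := hs
  rw [mcStep_c0]
  have e1 := rd_pm (m := 2*(p:ℤ)) (x := s.1.1) h6
  have e2 := rd_pm (m := 2*(q:ℤ)) (x := s.1.2) h7
  have hb1 := rd_move (m := 2*(p:ℤ)) (x := s.1.1) (by omega) h1 h2 h6
  have hb2 := rd_move (m := 2*(q:ℤ)) (x := s.1.2) (by omega) h3 h4 h7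
  refine ⟨hb1.1, hb1.2, hb2.1, hb2.2, ?_, e1, e2⟩
  simp only [Int.odd_iff] at h5 ⊢
  rcases e1 with e1 | e1 <;> rcases e2 with e2 | e2 <;> rw [e1, e2] <;> omega

lemma uI_step (hp : 0 < p) {s : (ℤ × ℤ) × (ℤ × ℤ)} (hs : MCValid p q s) :
    (4*(p:ℤ)) ∣ uI p (mcStep p q (fun _ => none) s) - (uI p s + 1) := by
  have := u_step (m := 2*(p:ℤ)) (x := s.1.1) (d := s.2.1) (by omega) hs.1 hs.2.1 hs.2.2.2.2.2.1
  rw [mcStep_c0]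
  unfold uI
  rw [show (4:ℤ)*(p:ℤ) = 2*(2*(p:ℤ)) by ring]
  exact this

lemma vI_step (hq : 0 < q) {s : (ℤ × ℤ) × (ℤ × ℤ)} (hs : MCValid p q s) :
    (4*(q:ℤ)) ∣ vI q (mcStep p q (fun _ => none) s) - (vI q s + 1) := by
  have := u_step (m := 2*(q:ℤ)) (x := s.1.2) (d := s.2.2) (by omega) hs.2.2.1 hs.2.2.2.1
    hs.2.2.2.2.2.2
  rw [mcStep_c0]
  unfold vI
  rw [show (4:ℤ)*(q:ℤ) = 2*(2*(q:ℤ)) by ring]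
  exact this

lemma uI_rev (p : ℕ) (s : (ℤ × ℤ) × (ℤ × ℤ)) :
    (4*(p:ℤ)) ∣ uI p (s.1, -s.2) + uI p s := by
  have := u_rev (2*(p:ℤ)) s.1.1 s.2.1
  unfold uI
  rw [show (4:ℤ)*(p:ℤ) = 2*(2*(p:ℤ)) by ring]
  exact this

lemma vI_rev (q : ℕ) (s : (ℤ × ℤ) × (ℤ × ℤ)) :
    (4*(q:ℤ)) ∣ vI q (s.1, -s.2) + vI q s := by
  have := u_rev (2*(q:ℤ)) s.1.2 s.2.2
  unfold vI
  rw [show (4:ℤ)*(q:ℤ) = 2*(2*(q:ℤ)) by ring]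
  exact this

lemma psiI_odd {s : (ℤ × ℤ) × (ℤ × ℤ)} (hs : MCValid p q s) : Odd (psiI p q s) := by
  obtain ⟨h1, h2, h3, h4, h5, h6, h7⟩ := hs
  have e1 := rd_pm (m := 2*(p:ℤ)) (x := s.1.1) h6
  have e2 := rd_pm (m := 2*(q:ℤ)) (x := s.1.2) h7
  unfold psiI vI uI
  simp only [Int.odd_iff] at h5 ⊢
  rcases e1 with e1 | e1 <;> rcases e2 with e2 | e2 <;> rw [e1, e2] <;> omega

end MCAux

namespace MCAux

variable {p q : ℕ}

/-- the step map on valid states. -/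
def S (hp : 0 < p) (hq : 0 < q) (s : {s // MCValid p q s}) : {s // MCValid p q s} :=
  ⟨mcStep p q (fun _ => none) s.val, valid_step hp hq s.2⟩

lemma eqv_step (hp : 0 < p) (hq : 0 < q) (s : {s // MCValid p q s}) :
    Relation.EqvGen (mcRel p q (fun _ => none)) s (S hp hq s) :=
  Relation.EqvGen.rel _ _ (Or.inl rfl)

lemma eqv_iter (hp : 0 < p) (hq : 0 < q) (s : {s // MCValid p q s}) (k : ℕ) :
    Relation.EqvGen (mcRel p q (fun _ => none)) s ((S hp hq)^[k] s) := by
  induction k with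
  | zero => exact Relation.EqvGen.refl s
  | succ n ih =>
      rw [Function.iterate_succ_apply']
      exact Relation.EqvGen.trans _ _ _ ih (eqv_step hp hq _)

/-- orientation reversal on valid states. -/
def rev (s : {s // MCValid p q s}) : {s // MCValid p q s} :=
  ⟨(s.val.1, -s.val.2), by
    obtain ⟨h1, h2, h3, h4, h5, h6, h7⟩ := s.2
    refine ⟨h1, h2, h3, h4, h5, ?_, ?_⟩
    · simp only [Prod.fst_neg]; omega
    · simp only [Prod.snd_neg]; omega⟩

lemma eqv_rev (s : {s // MCValid p q s}) :
    Relation.EqvGen (mcRel p q (fun _ => none)) s (rev s) :=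
  Relation.EqvGen.rel _ _ (Or.inr ⟨rfl, by show s.val.2 = -(-s.val.2); rw [neg_neg]⟩)

lemma uI_iter (hp : 0 < p) (hq : 0 < q) (s : {s // MCValid p q s}) (k : ℕ) :
    (4*(p:ℤ)) ∣ uI p ((S hp hq)^[k] s).val - (uI p s.val + k) := by
  induction k with
  | zero => simp
  | succ n ih =>
      rw [Function.iterate_succ_apply']
      have h1 := uI_step hp ((S hp hq)^[n] s).2
      have := dvd_add h1 ih
      rw [show (S hp hq ((S hp hq)^[n] s)).val
          = mcStep p q (fun _ => none) ((S hp hq)^[n] s).val from rfl]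
      convert this using 1
      · rfl
      push_cast
      ring

lemma vI_iter (hp : 0 < p) (hq : 0 < q) (s : {s // MCValid p q s}) (k : ℕ) :
    (4*(q:ℤ)) ∣ vI q ((S hp hq)^[k] s).val - (vI q s.val + k) := by
  induction k with
  | zero => simp
  | succ n ih =>
      rw [Function.iterate_succ_apply']
      have h1 := vI_step hq ((S hp hq)^[n] s).2
      have := dvd_add h1 ih
      rw [show (S hp hq ((S hp hq)^[n] s)).val
          = mcStep p q (fun _ => none) ((S hp hq)^[n] s).val from rfl]
      convert this using 1
      · rfl
      push_cast
      ring

lemma gcd_dvd_p : (4*(Nat.gcd p q : ℤ)) ∣ (4*(p:ℤ)) :=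
  mul_dvd_mul_left 4 (Int.natCast_dvd_natCast.mpr (Nat.gcd_dvd_left p q))

lemma gcd_dvd_q : (4*(Nat.gcd p q : ℤ)) ∣ (4*(q:ℤ)) :=
  mul_dvd_mul_left 4 (Int.natCast_dvd_natCast.mpr (Nat.gcd_dvd_right p q))

lemma psiI_step (hp : 0 < p) (hq : 0 < q) {s : (ℤ × ℤ) × (ℤ × ℤ)} (hs : MCValid p q s) :
    (4*(Nat.gcd p q : ℤ)) ∣ psiI p q (mcStep p q (fun _ => none) s) - psiI p q s := by
  have h1 := dvd_trans (gcd_dvd_p (p := p) (q := q)) (uI_step hp hs)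
  have h2 := dvd_trans (gcd_dvd_q (p := p) (q := q)) (vI_step hq hs)
  have := dvd_sub h2 h1
  convert this using 1
  · rfl
  unfold psiI
  ring

lemma psiI_rev (s : (ℤ × ℤ) × (ℤ × ℤ)) :
    (4*(Nat.gcd p q : ℤ)) ∣ psiI p q (s.1, -s.2) + psiI p q s := by
  have h1 := dvd_trans (gcd_dvd_p (p := p) (q := q)) (uI_rev p s)
  have h2 := dvd_trans (gcd_dvd_q (p := p) (q := q)) (vI_rev q s)
  have := dvd_sub h2 h1
  convert this using 1
  · rfl
  unfold psiI
  ring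

/-- General CRT via Bézout. -/
lemma crt {M N α β : ℤ} (h : (Int.gcd M N : ℤ) ∣ α - β) :
    ∃ k : ℤ, M ∣ k - α ∧ N ∣ k - β := by
  obtain ⟨t, ht⟩ := h
  refine ⟨α - M * Int.gcdA M N * t, ⟨-(Int.gcdA M N * t), by ring⟩,
    ⟨Int.gcdB M N * t, ?_⟩⟩
  have hg := Int.gcd_eq_gcd_ab M N
  linear_combination ht + t * hg

end MCAux

namespace MCAux

variable {p q : ℕ}

lemma reach (hp : 0 < p) (hq : 0 < q) (a b : {s // MCValid p q s})
    (h : (4*(Nat.gcd p q : ℤ)) ∣ psiI p q a.val - psiI p q b.val) :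
    Relation.EqvGen (mcRel p q (fun _ => none)) a b := by
  have hgcd : Int.gcd (4*(p:ℤ)) (4*(q:ℤ)) = 4 * Nat.gcd p q := by
    rw [show (4*(p:ℤ)) = ((4*p : ℕ) : ℤ) by push_cast; ring,
      show (4*(q:ℤ)) = ((4*q : ℕ) : ℤ) by push_cast; ring,
      Int.gcd_natCast_natCast, Nat.gcd_mul_left]
  have h' : (Int.gcd (4*(p:ℤ)) (4*(q:ℤ)) : ℤ) ∣
      (uI p b.val - uI p a.val) - (vI q b.val - vI q a.val) := by
    rw [hgcd]
    push_cast
    convert h using 1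
    unfold psiI
    ring
  obtain ⟨k, hk1, hk2⟩ := crt h'
  set n : ℤ := k + (4*(p:ℤ))*((4*(q:ℤ))*(1+|k|)) with hn
  have hP : (1:ℤ) ≤ 4*(p:ℤ) := by exact_mod_cast by omega
  have hQ : (1:ℤ) ≤ 4*(q:ℤ) := by exact_mod_cast by omega
  have hn0 : 0 ≤ n := by
    have h1 := abs_nonneg k
    have h2 := neg_abs_le k
    have e1 : (1:ℤ)+|k| ≤ (4*(q:ℤ))*(1+|k|) := le_mul_of_one_le_left (by linarith) hQ
    have e2 : (4*(q:ℤ))*(1+|k|) ≤ (4*(p:ℤ))*((4*(q:ℤ))*(1+|k|)) :=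
      le_mul_of_one_le_left (by linarith) hP
    rw [hn]
    linarith
  set N : ℕ := n.toNat with hNdef
  have hN : (N:ℤ) = n := Int.toNat_of_nonneg hn0
  set w := (S hp hq)^[N] a with hw
  have hu : (4*(p:ℤ)) ∣ uI p w.val - uI p b.val := by
    have d1 := uI_iter hp hq a N
    have d2 : (4*(p:ℤ)) ∣ (N:ℤ) - k := by
      rw [hN, hn]; exact ⟨(4*(q:ℤ))*(1+|k|), by ring⟩
    have := dvd_add (dvd_add d1 d2) hk1
    convert this using 1
    · rfl
    ring
  have hv : (4*(q:ℤ)) ∣ vI q w.val - vI q b.val := by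
    have d1 := vI_iter hp hq a N
    have d2 : (4*(q:ℤ)) ∣ (N:ℤ) - k := by
      rw [hN, hn]; exact ⟨(4*(p:ℤ))*(1+|k|), by ring⟩
    have := dvd_add (dvd_add d1 d2) hk2
    convert this using 1
    · rfl
    ring
  obtain ⟨w1, w2, w3, w4, w5, w6, w7⟩ := w.2
  obtain ⟨b1, b2, b3, b4, b5, b6, b7⟩ := b.2
  have hx := u_inj (m := 2*(p:ℤ)) (by omega) w1 w2 b1 b2 w6 b6
    (by rw [show (2:ℤ)*(2*(p:ℤ)) = 4*(p:ℤ) by ring]; exact hu)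
  have hy := u_inj (m := 2*(q:ℤ)) (by omega) w3 w4 b3 b4 w7 b7
    (by rw [show (2:ℤ)*(2*(q:ℤ)) = 4*(q:ℤ) by ring]; exact hv)
  have hstep : mcStep p q (fun _ => none) w.val = mcStep p q (fun _ => none) b.val := by
    rw [mcStep_c0, mcStep_c0, hx.2, hy.2, hx.1, hy.1]
  have c1 := eqv_iter hp hq a N
  have c2 := eqv_step hp hq w
  have c3 : S hp hq w = S hp hq b := Subtype.ext hstep
  have c4 := Relation.EqvGen.symm _ _ (eqv_step hp hq b)
  rw [c3] at c2
  exact Relation.EqvGen.trans _ _ _ c1 (Relation.EqvGen.trans _ _ _ c2 c4)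

end MCAux

namespace MCAux

variable {p q : ℕ}

lemma emod_congr {n x y : ℤ} (h : n ∣ x - y) : x % n = y % n :=
  Int.modEq_iff_dvd.mpr (by rw [show y - x = -(x-y) by ring]; exact dvd_neg.mpr h)

/-- residue of the slope invariant mod `4*gcd`. -/
def psiR (p q : ℕ) (s : (ℤ × ℤ) × (ℤ × ℤ)) : ℤ := psiI p q s % (4*(Nat.gcd p q : ℤ))

/-- canonical representative in `{1, 3, …, 2g-1}` of `±psiR`. -/
def rep (p q : ℕ) (s : (ℤ × ℤ) × (ℤ × ℤ)) : ℤ :=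
  min (psiR p q s) (4*(Nat.gcd p q : ℤ) - psiR p q s)

lemma psi_sub_psiR (s : (ℤ × ℤ) × (ℤ × ℤ)) :
    (4*(Nat.gcd p q : ℤ)) ∣ psiI p q s - psiR p q s := by
  have := Int.emod_def (psiI p q s) (4*(Nat.gcd p q : ℤ))
  exact ⟨psiI p q s / (4*(Nat.gcd p q : ℤ)), by unfold psiR; linarith⟩

lemma psiR_facts (hp : 0 < p) (hq : 0 < q) {s : (ℤ × ℤ) × (ℤ × ℤ)} (hs : MCValid p q s) :
    0 ≤ psiR p q s ∧ psiR p q s < 4*(Nat.gcd p q : ℤ) ∧ Odd (psiR p q s) := by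
  have hg : 0 < Nat.gcd p q := Nat.gcd_pos_of_pos_left q hp
  have hG : (0:ℤ) < 4*(Nat.gcd p q : ℤ) := by positivity
  refine ⟨Int.emod_nonneg _ (ne_of_gt hG), Int.emod_lt_of_pos _ hG, ?_⟩
  have h2 : psiR p q s % 2 = psiI p q s % 2 :=
    Int.emod_emod_of_dvd _ ⟨2*(Nat.gcd p q : ℤ), by ring⟩
  have := psiI_odd hs
  rw [Int.odd_iff] at this ⊢
  omega

lemma rep_facts (hp : 0 < p) (hq : 0 < q) {s : (ℤ × ℤ) × (ℤ × ℤ)} (hs : MCValid p q s) :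
    Odd (rep p q s) ∧ 1 ≤ rep p q s ∧ rep p q s ≤ 2*(Nat.gcd p q : ℤ) - 1 := by
  obtain ⟨h1, h2, h3⟩ := psiR_facts hp hq hs
  rw [Int.odd_iff] at h3
  unfold rep
  rw [Int.odd_iff]
  omega

lemma rep_invariant (hp : 0 < p) (hq : 0 < q) (a b : {s // MCValid p q s})
    (hab : mcRel p q (fun _ => none) a b) : rep p q a.val = rep p q b.val := by
  rcases hab with hst | hrev
  · have hd := psiI_step hp hq a.2
    rw [hst] at hd
    have : psiR p q a.val = psiR p q b.val := emod_congr (by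
      rw [show psiI p q a.val - psiI p q b.val = -(psiI p q b.val - psiI p q a.val) by ring]
      exact dvd_neg.mpr hd)
    unfold rep
    rw [this]
  · have hav : a.val = (b.val.1, -b.val.2) := by
      rcases hrev with ⟨h1, h2⟩
      exact Prod.ext h1 h2
    have hd : (4*(Nat.gcd p q : ℤ)) ∣ psiI p q a.val + psiI p q b.val := by
      rw [hav]; exact psiI_rev b.val
    obtain ⟨a1, a2, a3⟩ := psiR_facts hp hq a.2
    obtain ⟨b1, b2, b3⟩ := psiR_facts hp hq b.2
    have key : psiR p q a.val = 4*(Nat.gcd p q : ℤ) - psiR p q b.val := by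
      have hdd : (4*(Nat.gcd p q : ℤ)) ∣
          psiI p q a.val - (4*(Nat.gcd p q : ℤ) - psiR p q b.val) := by
        have := dvd_sub (dvd_sub hd (psi_sub_psiR b.val))
          (⟨1, by ring⟩ : (4*(Nat.gcd p q : ℤ)) ∣ 4*(Nat.gcd p q : ℤ))
        convert this using 1
        · rfl
        ring
      have h5 : psiR p q a.val = (4*(Nat.gcd p q : ℤ) - psiR p q b.val)
          % (4*(Nat.gcd p q : ℤ)) := emod_congr hdd
      rw [h5, Int.emod_eq_of_lt (by rw [Int.odd_iff] at b3; omega)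
        (by rw [Int.odd_iff] at b3; omega)]
    unfold rep
    rw [key]
    omega

/-- the canonical state `((0, r), (1,1))`. -/
def canV (hp : 0 < p) (hq : 0 < q) (r : ℤ) (h1 : 0 ≤ r) (h2 : r ≤ 2*(q:ℤ))
    (h3 : Odd r) : {s // MCValid p q s} :=
  ⟨((0, r), (1, 1)), by
    refine ⟨le_refl 0, by positivity, h1, h2, ?_, Or.inl rfl, Or.inl rfl⟩
    rw [Int.odd_iff] at h3
    simp only [Int.odd_iff]
    omega⟩

lemma psiI_can (hr0 : 0 < r) (hr2 : r < 2*(q:ℤ)) :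
    psiI p q ((0, r), (1, 1)) = r := by
  unfold psiI vI uI
  rw [rd_interior (m := 2*(q:ℤ)) (x := r) (by omega) (by omega)]
  ring

end MCAux

namespace MCAux

variable {p q : ℕ}

lemma canV_congr (hp : 0 < p) (hq : 0 < q) {r r' : ℤ} {h1 h2 h3 h1' h2' h3'}
    (h : r = r') : canV hp hq r h1 h2 h3 = canV hp hq r' h1' h2' h3' := by
  subst h; rfl

lemma eqv_to_can (hp : 0 < p) (hq : 0 < q) (s : {s // MCValid p q s})
    (h1 : 0 ≤ rep p q s.val) (h2 : rep p q s.val ≤ 2*(q:ℤ)) (h3 : Odd (rep p q s.val)) :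
    Relation.EqvGen (mcRel p q (fun _ => none)) s (canV hp hq (rep p q s.val) h1 h2 h3) := by
  obtain ⟨r1, r2, r3⟩ := rep_facts hp hq s.2
  obtain ⟨a1, a2, a3⟩ := psiR_facts hp hq s.2
  have hcan : psiI p q (canV hp hq (rep p q s.val) h1 h2 h3).val = rep p q s.val :=
    psiI_can (by rw [Int.odd_iff] at h3; omega) (by rw [Int.odd_iff] at h3; omega)
  rcases le_or_gt (psiR p q s.val) (4*(Nat.gcd p q : ℤ) - psiR p q s.val) with hmin | hmin
  · have hr : rep p q s.val = psiR p q s.val := min_eq_left hmin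
    apply reach hp hq
    rw [hcan, hr]
    exact psi_sub_psiR s.val
  · have hr : rep p q s.val = 4*(Nat.gcd p q : ℤ) - psiR p q s.val :=
      min_eq_right (le_of_lt hmin)
    refine Relation.EqvGen.trans _ _ _ (eqv_rev s) ?_
    apply reach hp hq
    rw [hcan, hr]
    have d1 : (4*(Nat.gcd p q : ℤ)) ∣ psiI p q (rev s).val + psiI p q s.val := by
      rw [show (rev s).val = (s.val.1, -s.val.2) from rfl]
      exact psiI_rev s.val
    have d2 := psi_sub_psiR (p := p) (q := q) s.val
    have := dvd_sub (dvd_sub d1 d2)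
      (⟨1, by ring⟩ : (4*(Nat.gcd p q : ℤ)) ∣ 4*(Nat.gcd p q : ℤ))
    convert this using 1
    · rfl
    ring

lemma rep_can (hp : 0 < p) (hq : 0 < q) (r : ℤ) (h0 : 0 ≤ r) (hodd : Odd r)
    (hlt : r ≤ 2*(Nat.gcd p q : ℤ) - 1) : rep p q ((0, r), (1, 1)) = r := by
  have hgq' : ((Nat.gcd p q : ℤ)) ≤ (q:ℤ) := by
    exact_mod_cast Nat.le_of_dvd hq (Nat.gcd_dvd_right p q)
  have hg : 0 < Nat.gcd p q := Nat.gcd_pos_of_pos_left q hp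
  have hg' : (0:ℤ) < (Nat.gcd p q : ℤ) := by exact_mod_cast hg
  rw [Int.odd_iff] at hodd
  have hpsi : psiI p q ((0, r), (1, 1)) = r := psiI_can (by omega) (by omega)
  unfold rep psiR
  rw [hpsi, Int.emod_eq_of_lt h0 (by omega)]
  omega

end MCAux


open MCAux in
/-- The number of closed components of the mirror-curve obtained from the rectangular grid
`RG[p,q]` with no internal mirrors equals `gcd(p, q)`. -/
theorem mcComponents_no_mirrors (p q : ℕ) (hp : 0 < p) (hq : 0 < q) :
    mcComponents p q (fun _ => none) = Nat.gcd p q := by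
  have hg : 0 < Nat.gcd p q := Nat.gcd_pos_of_pos_left q hp
  have hgq' : ((Nat.gcd p q : ℤ)) ≤ (q:ℤ) := by
    exact_mod_cast Nat.le_of_dvd hq (Nat.gcd_dvd_right p q)
  have hb1 : ∀ i : Fin (Nat.gcd p q), (0:ℤ) ≤ 2*((i:ℕ):ℤ)+1 := fun i => by positivity
  have hb2 : ∀ i : Fin (Nat.gcd p q), (2*((i:ℕ):ℤ)+1) ≤ 2*(q:ℤ) := fun i => by
    have := i.isLt
    have : ((i:ℕ):ℤ) < (Nat.gcd p q : ℤ) := by exact_mod_cast this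
    omega
  have hb3 : ∀ i : Fin (Nat.gcd p q), Odd (2*((i:ℕ):ℤ)+1) := fun i => ⟨((i:ℕ):ℤ), by ring⟩
  have hFlt : ∀ s : {s // MCValid p q s}, (rep p q s.val).toNat / 2 < Nat.gcd p q := by
    intro s
    obtain ⟨r1, r2, r3⟩ := rep_facts hp hq s.2
    rw [Int.odd_iff] at r1
    omega
  have e : Quot (mcRel p q (fun _ => none)) ≃ Fin (Nat.gcd p q) := by
    refine ⟨Quot.lift (fun s => ⟨(rep p q s.val).toNat / 2, hFlt s⟩)
        (fun a b hab => by simp only [rep_invariant hp hq a b hab]),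
      fun i => Quot.mk _ (canV hp hq (2*((i:ℕ):ℤ)+1) (hb1 i) (hb2 i) (hb3 i)), ?_, ?_⟩
    · apply Quot.ind
      intro s
      dsimp only
      obtain ⟨r1, r2, r3⟩ := rep_facts hp hq s.2
      have h1'' : (0:ℤ) ≤ rep p q s.val := by omega
      have h2'' : rep p q s.val ≤ 2*(q:ℤ) := by omega
      have e : (2*(((rep p q s.val).toNat / 2 : ℕ) : ℤ) + 1) = rep p q s.val := by
        rw [Int.odd_iff] at r1
        omega
      exact (congrArg (Quot.mk _) (canV_congr hp hq e)).trans
        ((Quot.eqvGen_sound (eqv_to_can hp hq s h1'' h2'' r1)).symm)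
    · intro i
      dsimp only
      apply Fin.ext
      show ((rep p q (canV hp hq (2*((i:ℕ):ℤ)+1) (hb1 i) (hb2 i) (hb3 i)).val).toNat / 2)
        = (i:ℕ)
      have hi : ((i:ℕ):ℤ) < (Nat.gcd p q : ℤ) := by exact_mod_cast i.isLt
      have hrc : rep p q ((0, (2*((i:ℕ):ℤ)+1)), (1, 1)) = 2*((i:ℕ):ℤ)+1 :=
        rep_can hp hq _ (hb1 i) (hb3 i) (by omega)
      rw [show (canV hp hq (2*((i:ℕ):ℤ)+1) (hb1 i) (hb2 i) (hb3 i)).val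
          = ((0, (2*((i:ℕ):ℤ)+1)), (1, 1)) from rfl, hrc]
      omega
  rw [mcComponents, Nat.card_congr e, Nat.card_eq_fintype_card, Fintype.card_fin]
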